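/- Let f: A → B be the (en, m+1, e−2) zero-difference balanced function constructed in Theorem 1 (from R of order n and subgroups G, H with |G| = e, |H| = e−1), where m = (en−1)/(e−1). For b ∈ Im(f) let w_b = |f^{−1}(b)|. Then the multiset {w_b : b ∈ Im(f)} equals {1} together with m copies of e−1. -/

import Mathlib

open Set Function

section ZDBAux

variable {R : Type*} [CommRing R]

/-- Orbit of `r` under a subgroup `H` of units. -/
def zdbOH (H : Subgroup Rˣ) (r : R) : Set R := {s | ∃ h : H, ((h : Rˣ) : R) * r = s}

lemma zdbOH_eq_iff (H : Subgroup Rˣ) (r s : R) :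
    zdbOH H r = zdbOH H s ↔ ∃ h : H, ((h : Rˣ) : R) * r = s := by
  constructor
  · intro h
    have hs : s ∈ zdbOH H s := ⟨1, by simp⟩
    rw [← h] at hs; exact hs
  · rintro ⟨h, rfl⟩
    ext t
    constructor
    · rintro ⟨h', rfl⟩
      refine ⟨h' * h⁻¹, ?_⟩
      push_cast
      rw [mul_assoc]
      congr 1
      rw [← mul_assoc]
      norm_cast
      rw [inv_mul_cancel]
      push_cast
      ring
    · rintro ⟨h', rfl⟩
      refine ⟨h' * h, ?_⟩
      push_cast
      ring
end ZDBAux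

section ZDBf

variable {R : Type*} [CommRing R]

open Classical in
/-- The function of Theorem 1, mapping into an auxiliary target. -/
noncomputable def zdbF (G H : Subgroup Rˣ) : R × Additive G → Option (Unit ⊕ Set R ⊕ R) :=
  fun p =>
    if p.1 = 0 then (if p.2.toMul = (1 : G) then none else some (.inl ()))
    else if p.2.toMul = (1 : G) then some (.inr (.inl (zdbOH H p.1)))
    else some (.inr (.inr (((p.2.toMul : Rˣ) : R) * p.1)))

lemma zdbF_eq_iff (G H : Subgroup Rˣ) (p q : R × Additive G) :
    zdbF G H p = zdbF G H q ↔
      ((p.1 = 0 ∧ q.1 = 0 ∧ (p.2.toMul = (1 : G) ↔ q.2.toMul = (1 : G))) ∨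
       (p.1 ≠ 0 ∧ q.1 ≠ 0 ∧ p.2.toMul = (1 : G) ∧ q.2.toMul = (1 : G) ∧
          ∃ h : H, ((h : Rˣ) : R) * p.1 = q.1) ∨
       (p.1 ≠ 0 ∧ q.1 ≠ 0 ∧ p.2.toMul ≠ (1 : G) ∧ q.2.toMul ≠ (1 : G) ∧
          ((p.2.toMul : Rˣ) : R) * p.1 = ((q.2.toMul : Rˣ) : R) * q.1)) := by
  unfold zdbF
  split_ifs with h1 h2 h3 h4 h5 h6 h7 <;>
    simp_all [zdbOH_eq_iff]

end ZDBf

open Finset in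
lemma zdb_card_partition {α β : Type*} [Fintype α] (f : α → β) (b₀ : β)
    (k : ℕ) (h1 : (f ⁻¹' {b₀}).ncard = 1)
    (h2 : ∀ b ∈ Set.range f, b ≠ b₀ → (f ⁻¹' {b}).ncard = k) :
    Nat.card α = 1 + ((Set.range f).ncard - 1) * k := by
  classical
  have hrange : Set.range f = (↑(Finset.univ.image f) : Set β) := by
    ext b; simp
  have hfib : ∀ b : β, (f ⁻¹' {b}).ncard
      = (Finset.univ.filter (fun a => f a = b)).card := by
    intro b
    rw [← Set.ncard_coe_finset]
    congr 1
    ext a; simp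
  have hb₀mem : b₀ ∈ Finset.univ.image f := by
    obtain ⟨a, ha⟩ := by
      have : (f ⁻¹' {b₀}).Nonempty := by
        rw [← Set.ncard_pos (Set.toFinite _), h1]; norm_num
      exact this
    simp only [Set.mem_preimage, Set.mem_singleton_iff] at ha
    exact Finset.mem_image.2 ⟨a, Finset.mem_univ a, ha⟩
  have hsum : Fintype.card α =
      ∑ b ∈ Finset.univ.image f, (Finset.univ.filter (fun a => f a = b)).card :=
    Finset.card_eq_sum_card_fiberwise (fun a _ => Finset.mem_image.2 ⟨a, Finset.mem_univ a, rfl⟩)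
  rw [Nat.card_eq_fintype_card, hsum, ← Finset.insert_erase hb₀mem, Finset.sum_insert
    (Finset.notMem_erase _ _)]
  have h1' : (Finset.univ.filter (fun a => f a = b₀)).card = 1 := by rw [← hfib, h1]
  rw [h1']
  congr 1
  rw [Finset.sum_congr rfl (fun b hb => ?_), Finset.sum_const, Finset.card_erase_of_mem hb₀mem,
    smul_eq_mul, hrange, Set.ncard_coe_finset]
  · rw [← hfib]
    exact h2 b (by rw [hrange]; exact_mod_cast Finset.mem_of_mem_erase hb) (Finset.ne_of_mem_erase hb)

lemma zdb_card_ne {α : Type*} [Finite α] (a : α) :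
    Nat.card {x : α // x ≠ a} = Nat.card α - 1 := by
  have h := Set.ncard_add_ncard_compl ({a} : Set α)
  rw [Set.ncard_singleton] at h
  have e : {x : α // x ≠ a} ≃ ↥(({a} : Set α)ᶜ) := Equiv.subtypeEquivRight (by simp)
  rw [Nat.card_congr e, Nat.card_coe_set_eq]
  omega

lemma zdb_card_ne2 {α : Type*} [Finite α] (a b : α) (hab : a ≠ b) :
    Nat.card {x : α // x ≠ a ∧ x ≠ b} = Nat.card α - 2 := by
  have h := Set.ncard_add_ncard_compl ({a, b} : Set α)
  rw [Set.ncard_pair hab] at h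
  have e : {x : α // x ≠ a ∧ x ≠ b} ≃ ↥(({a, b} : Set α)ᶜ) :=
    Equiv.subtypeEquivRight (by simp [not_or])
  rw [Nat.card_congr e, Nat.card_coe_set_eq]
  omega

lemma zdb_ncard_range {α β : Type*} (g : α → β) (hg : Function.Injective g)
    (S : Set β) (h : S = Set.range g) : S.ncard = Nat.card α := by
  rw [h, ← Set.image_univ, Set.ncard_image_of_injective _ hg, Set.ncard_univ]

section MoreAux
variable {R : Type*} [CommRing R]

lemma zdb_inv_mul_cancel {K : Subgroup Rˣ} (k : K) (r : R) :
    (((k⁻¹ : K) : Rˣ) : R) * ((((k : K) : Rˣ) : R) * r) = r := by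
  have hcoe : ((k⁻¹ : K) : Rˣ) = ((k : K) : Rˣ)⁻¹ := rfl
  rw [← mul_assoc, hcoe, Units.inv_mul, one_mul]

lemma zdb_coe_mul {K : Subgroup Rˣ} (a b : K) (r : R) :
    (((a * b : K) : Rˣ) : R) * r = ((a : Rˣ) : R) * (((b : Rˣ) : R) * r) := by
  push_cast; ring

end MoreAux

/-- `f : A → B` is an `(N, m, λ)` zero-difference balanced function. -/
def IsZDB {A B : Type*} [AddGroup A] (f : A → B) (N m lam : ℕ) : Prop :=
  Nat.card A = N ∧ Set.ncard (Set.range f) = m ∧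
    ∀ a : A, a ≠ 0 → Set.ncard {x : A | f (x + a) = f x} = lam

/-- Proposition 3: the ZDB function of Theorem 1 has one fiber of size `1` and
`m = (en-1)/(e-1)` fibers of size `e - 1`. -/
theorem zdb_fiber_sizes {R : Type*} [CommRing R] [Fintype R]
    (G H : Subgroup Rˣ)
    (hG : ∀ g ∈ G, ((g : Rˣ) : R) - 1 ≠ 0 → IsUnit (((g : Rˣ) : R) - 1))
    (hH : ∀ h ∈ H, ((h : Rˣ) : R) - 1 ≠ 0 → IsUnit (((h : Rˣ) : R) - 1))
    (hcard : Nat.card H = Nat.card G - 1) :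
    ∃ f : R × Additive G →
        ZMod ((Nat.card G * Nat.card R - 1) / (Nat.card G - 1) + 1),
      IsZDB f (Nat.card G * Nat.card R)
        ((Nat.card G * Nat.card R - 1) / (Nat.card G - 1) + 1)
        (Nat.card G - 2) ∧
      ∃ b ∈ Set.range f, Set.ncard (f ⁻¹' {b}) = 1 ∧
        ∀ b' ∈ Set.range f, b' ≠ b →
          Set.ncard (f ⁻¹' {b'}) = Nat.card G - 1 := by
  classical
  have hinj : Function.Injective (Units.val : Rˣ → R) := fun _ _ h => Units.ext h
  -- difference of distinct subgroup elements is a unit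
  have key : ∀ (K : Subgroup Rˣ),
      (∀ g ∈ K, ((g : Rˣ) : R) - 1 ≠ 0 → IsUnit (((g : Rˣ) : R) - 1)) →
      ∀ x y : K, x ≠ y → IsUnit (((x : Rˣ) : R) - ((y : Rˣ) : R)) := by
    intro K hK x y hxy
    have h1 : (y⁻¹ * x : K) ≠ 1 := by
      intro h
      exact hxy (inv_mul_eq_one.mp h).symm
    have h2 : (((y⁻¹ * x : K) : Rˣ) : R) - 1 ≠ 0 := by
      intro h0
      apply h1
      have hval : (((y⁻¹ * x : K) : Rˣ) : R) = 1 := sub_eq_zero.mp h0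
      have : ((y⁻¹ * x : K) : Rˣ) = 1 := hinj (by simpa using hval)
      exact Subtype.ext this
    have h3 := hK _ (y⁻¹ * x : K).2 h2
    have heq : ((x : Rˣ) : R) - ((y : Rˣ) : R)
        = ((y : Rˣ) : R) * ((((y⁻¹ * x : K) : Rˣ) : R) - 1) := by
      push_cast
      rw [mul_sub, mul_one, ← mul_assoc, Units.mul_inv, one_mul]
    rw [heq]
    exact ((y : Rˣ).isUnit).mul h3
  have cancel : ∀ (K : Subgroup Rˣ),
      (∀ g ∈ K, ((g : Rˣ) : R) - 1 ≠ 0 → IsUnit (((g : Rˣ) : R) - 1)) →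
      ∀ x y : K, x ≠ y → ∀ r : R, ((x : Rˣ) : R) * r = ((y : Rˣ) : R) * r → r = 0 := by
    intro K hK x y hxy r hr
    have h := key K hK x y hxy
    refine h.mul_left_cancel ?_
    rw [mul_zero, sub_mul, hr, sub_self]
  have he1 : 1 ≤ Nat.card H := Nat.card_pos
  have he2 : 2 ≤ Nat.card G := by omega
  set f₁ := zdbF G H with hf₁
  set z₀ : R × Additive G := ((0 : R), (0 : Additive G)) with hz₀
  have hz₀1 : z₀.1 = (0 : R) := rfl
  have hz₀2 : z₀.2.toMul = (1 : G) := rfl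
  -- the singleton fiber
  have fib0 : {z : R × Additive G | f₁ z = f₁ z₀} = {z₀} := by
    ext z
    rw [Set.mem_setOf_eq, hf₁, zdbF_eq_iff, Set.mem_singleton_iff]
    constructor
    · rintro (⟨h1, -, h2⟩ | ⟨-, h, -⟩ | ⟨-, h, -⟩)
      · exact Prod.ext h1 (toMul_eq_one.mp (h2.mpr hz₀2))
      · exact absurd hz₀1 h
      · exact absurd hz₀1 h
    · rintro rfl
      exact Or.inl ⟨rfl, rfl, Iff.rfl⟩
  -- fibers over other points have cardinality (Nat.card G) - 1
  have fib1 : ∀ w : R × Additive G, w ≠ z₀ →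
      ({z : R × Additive G | f₁ z = f₁ w}).ncard = Nat.card G - 1 := by
    intro w hw
    by_cases hw1 : w.1 = 0
    · have hw2 : w.2.toMul ≠ (1 : G) := by
        intro h
        exact hw (Prod.ext hw1 (toMul_eq_one.mp h))
      have hset : {z : R × Additive G | f₁ z = f₁ w}
          = Set.range (fun y : {y : G // y ≠ 1} =>
              (((0 : R), Additive.ofMul (y : G)) : R × Additive G)) := by
        ext z
        rw [Set.mem_setOf_eq, hf₁, zdbF_eq_iff]
        constructor
        · rintro (⟨h1, -, h2⟩ | ⟨-, h, -⟩ | ⟨-, h, -⟩)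
          · refine ⟨⟨z.2.toMul, fun h => hw2 (h2.mp h)⟩, ?_⟩
            exact Prod.ext h1.symm (ofMul_toMul _)
          · exact absurd hw1 h
          · exact absurd hw1 h
        · rintro ⟨y, rfl⟩
          exact Or.inl ⟨rfl, hw1, ⟨fun h => absurd h y.2, fun h => absurd h hw2⟩⟩
      rw [hset, zdb_ncard_range _ ?_ _ rfl, zdb_card_ne]
      intro y₁ y₂ h
      simp only [Prod.mk.injEq, true_and] at h
      exact Subtype.ext (Additive.ofMul.injective h)
    · by_cases hw2 : w.2.toMul = (1 : G)
      · -- fiber = H-orbit of w.1, with second coordinate 1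
        have hset : {z : R × Additive G | f₁ z = f₁ w}
            = Set.range (fun h : H =>
                (((((h : Rˣ) : R) * w.1 : R), (0 : Additive G)) : R × Additive G)) := by
          ext z
          rw [Set.mem_setOf_eq, hf₁, zdbF_eq_iff]
          constructor
          · rintro (⟨-, h1, -⟩ | ⟨hz1, -, hz2, -, h, hh⟩ | ⟨-, -, -, h, -⟩)
            · exact absurd h1 hw1
            · refine ⟨h⁻¹, Prod.ext ?_ (toMul_eq_one.mp hz2).symm⟩
              show (((h⁻¹ : H) : Rˣ) : R) * w.1 = z.1
              rw [← hh]
              exact zdb_inv_mul_cancel h z.1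
            · exact absurd hw2 h
          · rintro ⟨h, rfl⟩
            refine Or.inr (Or.inl ⟨?_, hw1, by simp, hw2, ⟨h⁻¹, zdb_inv_mul_cancel h w.1⟩⟩)
            intro h0
            exact hw1 ((Units.mul_right_eq_zero _).mp h0)
        rw [hset, zdb_ncard_range _ ?_ _ rfl, ← hcard]
        intro h₁ h₂ hh
        simp only [Prod.mk.injEq, and_true] at hh
        by_contra hne
        exact hw1 (cancel H hH h₁ h₂ hne w.1 hh)
      · -- fiber = G-orbit of (w.1, w.2)
        have hset : {z : R × Additive G | f₁ z = f₁ w}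
            = Set.range (fun y : {y : G // y ≠ 1} =>
                ((((((y : G)⁻¹ * w.2.toMul : G) : Rˣ) : R) * w.1,
                  Additive.ofMul ((y : G))) : R × Additive G)) := by
          ext z
          rw [Set.mem_setOf_eq, hf₁, zdbF_eq_iff]
          constructor
          · rintro (⟨-, h1, -⟩ | ⟨-, -, -, h, -⟩ | ⟨hz1, -, hz2, -, hval⟩)
            · exact absurd h1 hw1
            · exact absurd h hw2
            · refine ⟨⟨z.2.toMul, hz2⟩, Prod.ext ?_ (ofMul_toMul _)⟩
              show ((((z.2.toMul)⁻¹ * w.2.toMul : G) : Rˣ) : R) * w.1 = z.1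
              rw [zdb_coe_mul, ← hval, zdb_inv_mul_cancel]
          · rintro ⟨y, rfl⟩
            refine Or.inr (Or.inr ⟨?_, hw1, fun h => absurd h y.2, hw2, ?_⟩)
            · intro h0
              exact hw1 ((Units.mul_right_eq_zero _).mp h0)
            · have hy : (y : G) * ((y : G)⁻¹ * w.2.toMul) = w.2.toMul := by group
              show (((y : G) : Rˣ) : R) *
                  (((((y : G)⁻¹ * w.2.toMul : G) : Rˣ) : R) * w.1)
                  = (((w.2.toMul : G) : Rˣ) : R) * w.1
              rw [← zdb_coe_mul, hy]
        rw [hset, zdb_ncard_range _ ?_ _ rfl, zdb_card_ne]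
        intro y₁ y₂ hh
        simp only [Prod.mk.injEq] at hh
        exact Subtype.ext (Additive.ofMul.injective hh.2)
  -- the zero-difference balance property
  have zdb : ∀ a : R × Additive G, a ≠ 0 →
      ({z : R × Additive G | f₁ (z + a) = f₁ z}).ncard = Nat.card G - 2 := by
    intro a ha
    by_cases hg : a.2.toMul = (1 : G)
    · -- a = (s, 1) with s ≠ 0
      have hs : a.1 ≠ 0 := by
        intro h0
        exact ha (Prod.ext h0 (toMul_eq_one.mp hg))
      have hu : ∀ h : {h : H // h ≠ 1}, IsUnit ((((h : H) : Rˣ) : R) - 1) := by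
        intro h
        simpa using key H hH (h : H) 1 h.2
      set ρ : {h : H // h ≠ 1} → R := fun h =>
        -((((hu h).unit⁻¹ : Rˣ) : R) * ((((h : H) : Rˣ) : R) * a.1)) with hρ
      have hspec : ∀ h : {h : H // h ≠ 1},
          (((hu h).unit : Rˣ) : R) = (((h : H) : Rˣ) : R) - 1 := fun h => (hu h).unit_spec
      have hprop : ∀ h : {h : H // h ≠ 1},
          (((hu h).unit : Rˣ) : R) * ρ h = -((((h : H) : Rˣ) : R) * a.1) := by
        intro h
        simp only [hρ]
        rw [mul_neg, Units.mul_inv_cancel_left]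
      have hEq : ∀ h : {h : H // h ≠ 1},
          ((((h : H) : Rˣ) : R)) * (ρ h + a.1) = ρ h := by
        intro h
        linear_combination hprop h - ρ h * hspec h
      have hr0 : ∀ h : {h : H // h ≠ 1}, ρ h ≠ 0 := by
        intro h h0
        have hp := hprop h
        rw [h0, mul_zero] at hp
        exact hs ((Units.mul_right_eq_zero _).mp (by linear_combination hp))
      have hrs : ∀ h : {h : H // h ≠ 1}, ρ h + a.1 ≠ 0 := by
        intro h h0
        have hp := hEq h
        rw [h0, mul_zero] at hp
        exact hr0 h hp.symm
      have hset : {z : R × Additive G | f₁ (z + a) = f₁ z}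
          = Set.range (fun h : {h : H // h ≠ 1} =>
              ((ρ h, (0 : Additive G)) : R × Additive G)) := by
        ext z
        rw [Set.mem_setOf_eq, hf₁, zdbF_eq_iff]
        simp only [Prod.fst_add, Prod.snd_add, toMul_add, hg, mul_one]
        constructor
        · rintro (⟨h1, h2, -⟩ | ⟨hp1, hq1, hp2, -, h, hh⟩ | ⟨-, -, -, -, hval⟩)
          · rw [h2, zero_add] at h1
            exact absurd h1 hs
          · have hne : h ≠ 1 := by
              rintro rfl
              apply hs
              have : (1 : R) * (z.1 + a.1) = z.1 := by simpa using hh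
              rw [one_mul] at this
              linear_combination this
            refine ⟨⟨h, hne⟩, Prod.ext ?_ (toMul_eq_one.mp hp2).symm⟩
            show ρ ⟨h, hne⟩ = z.1
            refine (((hu ⟨h, hne⟩).unit.isUnit).mul_left_cancel ?_).symm
            linear_combination z.1 * hspec ⟨h, hne⟩ + hh - hprop ⟨h, hne⟩
          · exfalso
            apply hs
            have := ((z.2.toMul : Rˣ)).isUnit.mul_left_cancel hval
            linear_combination this
        · rintro ⟨h, rfl⟩
          refine Or.inr (Or.inl ⟨hrs h, hr0 h, toMul_zero, toMul_zero, ⟨(h : H), hEq h⟩⟩)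
      rw [hset, zdb_ncard_range _ ?_ _ rfl, zdb_card_ne, hcard]
      · omega
      · intro h₁ h₂ hh
        simp only [Prod.mk.injEq, and_true] at hh
        by_contra hne
        have hne' : (h₁ : H) ≠ (h₂ : H) := fun hc => hne (Subtype.ext hc)
        have h1 := hEq h₁
        have h2 := hEq h₂
        rw [hh] at h1
        exact hrs h₂ (cancel H hH _ _ hne' _ (h1.trans h2.symm))
    · -- a = (s, g) with g ≠ 1
      have hu : IsUnit ((((a.2.toMul : G) : Rˣ) : R) - 1) := by
        simpa using key G hG a.2.toMul 1 hg
      set r₀ : R :=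
        -(((hu.unit⁻¹ : Rˣ) : R) * ((((a.2.toMul : G) : Rˣ) : R) * a.1)) with hr₀def
      have hspec : ((hu.unit : Rˣ) : R) = (((a.2.toMul : G) : Rˣ) : R) - 1 := hu.unit_spec
      have hprop : ((hu.unit : Rˣ) : R) * r₀
          = -((((a.2.toMul : G) : Rˣ) : R) * a.1) := by
        rw [hr₀def, mul_neg, Units.mul_inv_cancel_left]
      have hEq : (((a.2.toMul : G) : Rˣ) : R) * (r₀ + a.1) = r₀ := by
        linear_combination hprop - r₀ * hspec
      have hUniq : ∀ r : R, (((a.2.toMul : G) : Rˣ) : R) * (r + a.1) = r → r = r₀ := by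
        intro r hr
        refine (hu.unit.isUnit).mul_left_cancel ?_
        linear_combination r * hspec + hr - hprop
      have hz : a.1 = 0 → r₀ = 0 := by
        intro h0
        have hp := hprop
        rw [h0, mul_zero, neg_zero] at hp
        refine (hu.unit.isUnit).mul_left_cancel ?_
        rw [mul_zero]
        exact hp
      have hs1 : a.1 ≠ 0 → r₀ ≠ 0 := by
        intro hs h0
        have hp := hprop
        rw [h0, mul_zero] at hp
        exact hs ((Units.mul_right_eq_zero _).mp (by linear_combination hp))
      have hrs : a.1 ≠ 0 → r₀ + a.1 ≠ 0 := by
        intro hs h0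
        have hp := hEq
        rw [h0, mul_zero] at hp
        exact hs1 hs hp.symm
      have hinv_ne : (1 : G) ≠ (a.2.toMul)⁻¹ := by
        intro h
        apply hg
        have := congrArg (·⁻¹) h
        simpa using this.symm
      have hset : {z : R × Additive G | f₁ (z + a) = f₁ z}
          = Set.range (fun y : {y : G // y ≠ 1 ∧ y ≠ (a.2.toMul)⁻¹} =>
              ((r₀, Additive.ofMul (y : G)) : R × Additive G)) := by
        ext z
        rw [Set.mem_setOf_eq, hf₁, zdbF_eq_iff]
        simp only [Prod.fst_add, Prod.snd_add, toMul_add]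
        constructor
        · rintro (⟨h1, h2, h3⟩ | ⟨-, -, h4, h5, -⟩ | ⟨hp1, hq1, hp2, hq2, hval⟩)
          · have hs0 : a.1 = 0 := by rw [h2, zero_add] at h1; exact h1
            have hz1 : z.2.toMul ≠ 1 := by
              intro h
              apply hg
              have := h3.mpr h
              rw [h, one_mul] at this
              exact this
            have hz2 : z.2.toMul ≠ (a.2.toMul)⁻¹ := by
              intro h
              apply hz1
              apply h3.mp
              rw [h, inv_mul_cancel]
            refine ⟨⟨z.2.toMul, hz1, hz2⟩, Prod.ext ?_ (ofMul_toMul _)⟩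
            show r₀ = z.1
            rw [hz hs0, h2]
          · exfalso
            apply hg
            rw [h5, one_mul] at h4
            exact h4
          · rw [zdb_coe_mul] at hval
            have hv := ((z.2.toMul : Rˣ)).isUnit.mul_left_cancel hval
            have hz2 : z.2.toMul ≠ (a.2.toMul)⁻¹ := by
              intro h
              apply hp2
              rw [h, inv_mul_cancel]
            refine ⟨⟨z.2.toMul, hq2, hz2⟩, Prod.ext ?_ (ofMul_toMul _)⟩
            show r₀ = z.1
            exact (hUniq z.1 hv).symm
        · rintro ⟨y, rfl⟩
          by_cases hs : a.1 = 0
          · refine Or.inl ⟨?_, hz hs, ?_⟩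
            · show r₀ + a.1 = 0
              rw [hz hs, hs, add_zero]
            · constructor
              · intro h
                exact absurd (mul_eq_one_iff_eq_inv.mp h) y.2.2
              · intro h
                exact absurd h y.2.1
          · refine Or.inr (Or.inr ⟨hrs hs, hs1 hs, ?_, y.2.1, ?_⟩)
            · intro h
              exact y.2.2 (mul_eq_one_iff_eq_inv.mp h)
            · show ((((y : G) * a.2.toMul : G) : Rˣ) : R) * (r₀ + a.1)
                = (((y : G) : Rˣ) : R) * r₀
              rw [zdb_coe_mul, hEq]
      rw [hset, zdb_ncard_range _ ?_ _ rfl, zdb_card_ne2 _ _ hinv_ne]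
      intro y₁ y₂ hh
      simp only [Prod.mk.injEq, true_and] at hh
      exact Subtype.ext (Additive.ofMul.injective hh)
  -- cardinality bookkeeping
  haveI : Fintype (R × Additive G) := Fintype.ofFinite _
  have hA : Nat.card (R × Additive G) = Nat.card G * Nat.card R := by
    have h2 : Nat.card (Additive G) = Nat.card G := Nat.card_congr Additive.toMul
    rw [Nat.card_prod, h2, mul_comm]
  have hpre : ∀ b, f₁ ⁻¹' {b} = {z : R × Additive G | f₁ z = b} := fun b => rfl
  have h1 : (f₁ ⁻¹' {f₁ z₀}).ncard = 1 := by
    rw [hpre, fib0, Set.ncard_singleton]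
  have h2 : ∀ b ∈ Set.range f₁, b ≠ f₁ z₀ → (f₁ ⁻¹' {b}).ncard = Nat.card G - 1 := by
    rintro b ⟨w, rfl⟩ hb
    have hw : w ≠ z₀ := fun h => hb (by rw [h])
    rw [hpre]
    exact fib1 w hw
  have hpart := zdb_card_partition f₁ (f₁ z₀) (Nat.card G - 1) h1 h2
  rw [hA] at hpart
  have hKfin : (Set.range f₁).Finite := Set.finite_range f₁
  have hK1 : 1 ≤ (Set.range f₁).ncard := by
    rw [Nat.one_le_iff_ne_zero, Ne, Set.ncard_eq_zero hKfin]
    exact Set.range_nonempty f₁ |>.ne_empty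
  have hKm : (Set.range f₁).ncard
      = (Nat.card G * Nat.card R - 1) / (Nat.card G - 1) + 1 := by
    have h5 : Nat.card G * Nat.card R - 1
        = ((Set.range f₁).ncard - 1) * (Nat.card G - 1) := by omega
    rw [h5, Nat.mul_div_cancel _ (by omega : 0 < Nat.card G - 1)]
    omega
  -- transport along an equivalence with ZMod (m+1)
  haveI : Finite ↥(Set.range f₁) := hKfin.to_subtype
  have hcards : Nat.card ↥(Set.range f₁)
      = Nat.card (ZMod ((Nat.card G * Nat.card R - 1) / (Nat.card G - 1) + 1)) := by
    rw [Nat.card_coe_set_eq, Nat.card_zmod, hKm]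
  obtain ⟨eqv⟩ := Finite.card_eq.mp hcards
  set f : R × Additive G → ZMod ((Nat.card G * Nat.card R - 1) / (Nat.card G - 1) + 1) :=
    fun z => eqv ⟨f₁ z, Set.mem_range_self z⟩ with hfdef
  have hff : ∀ p q : R × Additive G, f p = f q ↔ f₁ p = f₁ q := by
    intro p q
    constructor
    · intro h
      exact congrArg Subtype.val (eqv.injective h)
    · intro h
      exact congrArg eqv (Subtype.ext h)
  have hsurj : Function.Surjective f := by
    intro b
    obtain ⟨z, hz⟩ := (eqv.symm b).2
    refine ⟨z, ?_⟩
    show eqv ⟨f₁ z, _⟩ = b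
    rw [show (⟨f₁ z, Set.mem_range_self z⟩ : ↥(Set.range f₁)) = eqv.symm b from
      Subtype.ext hz, Equiv.apply_symm_apply]
  refine ⟨f, ⟨hA, ?_, ?_⟩, f z₀, ⟨z₀, rfl⟩, ?_, ?_⟩
  · rw [hsurj.range_eq, Set.ncard_univ, Nat.card_zmod]
  · intro a ha
    have hsets : {x : R × Additive G | f (x + a) = f x}
        = {x : R × Additive G | f₁ (x + a) = f₁ x} := Set.ext fun x => hff _ _
    rw [hsets]
    exact zdb a ha
  · have : f ⁻¹' {f z₀} = {z : R × Additive G | f₁ z = f₁ z₀} :=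
      Set.ext fun z => hff _ _
    rw [this, fib0, Set.ncard_singleton]
  · rintro b' ⟨w, rfl⟩ hb'
    have hw : w ≠ z₀ := fun h => hb' (by rw [h])
    have : f ⁻¹' {f w} = {z : R × Additive G | f₁ z = f₁ w} :=
      Set.ext fun z => hff _ _
    rw [this]
    exact fib1 w hw
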